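/- Consider the structural equation model Z := ε_Z, X := h(Z, ε_X), Y := f(X, Z, ε_Y), where ε_Z, ε_X, ε_Y are independent random elements on a probability space (Ω, F, P) with values in ℝ^k, ℝ^m, ℝ^l respectively, and h : ℝ^k × ℝ^m → ℝ and f : ℝ × ℝ^k × ℝ^l → ℝ are measurable with f bounded. Define the interventional expectation E[Y | do(X = x)] := E[f(x, Z, ε_Y)] and the regression function m(u, z) := E[f(u, z, ε_Y)]. Then: (i) m is measurable and m(X, Z) is a version of the conditional expectation E[Y | σ(X, Z)]; and (ii) the backdoor adjustment formula with the parental adjustment set S = {Z} holds: E[Y | do(X = x)] = ∫ m(x, z) dP_Z(z), where P_Z is the law of Z. -/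

import Mathlib

open MeasureTheory ProbabilityTheory

private lemma integrable_of_bdd {α : Type*} [MeasurableSpace α] {μ : Measure α}
    [IsFiniteMeasure μ] {g : α → ℝ} (hg : AEStronglyMeasurable g μ) (B : ℝ)
    (hB : ∀ a, |g a| ≤ B) : Integrable g μ :=
  (integrable_const B).mono' hg (Filter.Eventually.of_forall fun a => by
    simpa [Real.norm_eq_abs] using hB a)

/-- **Backdoor adjustment with the parental set.**
In the SEM `Z := ε_Z`, `X := h(Z, ε_X)`, `Y := f(X, Z, ε_Y)` with jointly independent
noises (encoded as `ε_Z ⟂ ε_X` and `(ε_Z, ε_X) ⟂ ε_Y`), `h, f` measurable and `f`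
bounded, with regression function `m(u, z) := E[f(u, z, ε_Y)]`:
(i) `m` is measurable and `m(X, Z)` is a version of `E[Y | σ(X, Z)]`; and
(ii) the backdoor adjustment formula with the parental adjustment set `S = {Z}` holds:
`E[Y | do(X = x)] = ∫ m(x, z) dP_Z(z)`. -/
theorem backdoor_adjustment_parental_set
    {Ω : Type*} [MeasurableSpace Ω] (P : Measure Ω) [IsProbabilityMeasure P]
    {k m l : ℕ} (εZ : Ω → (Fin k → ℝ)) (εX : Ω → (Fin m → ℝ)) (εY : Ω → (Fin l → ℝ))
    (hεZ : Measurable εZ) (hεX : Measurable εX) (hεY : Measurable εY)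
    (hindep1 : IndepFun εZ εX P)
    (hindep2 : IndepFun (fun ω => (εZ ω, εX ω)) εY P)
    (h : (Fin k → ℝ) → (Fin m → ℝ) → ℝ) (hh : Measurable (Function.uncurry h))
    (f : ℝ → (Fin k → ℝ) → (Fin l → ℝ) → ℝ)
    (hf : Measurable (fun p : ℝ × (Fin k → ℝ) × (Fin l → ℝ) => f p.1 p.2.1 p.2.2))
    (B : ℝ) (hfB : ∀ u z e, |f u z e| ≤ B)
    (Z : Ω → (Fin k → ℝ)) (X : Ω → ℝ) (Y : Ω → ℝ)
    (hZ : Z = εZ)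
    (hXdef : ∀ ω, X ω = h (Z ω) (εX ω))
    (hYdef : ∀ ω, Y ω = f (X ω) (Z ω) (εY ω))
    (x : ℝ) :
    (Measurable (fun p : ℝ × (Fin k → ℝ) => ∫ ω, f p.1 p.2 (εY ω) ∂P) ∧
      P[Y | MeasurableSpace.comap (fun ω => (X ω, Z ω)) inferInstance]
        =ᵐ[P] fun ω => ∫ ω', f (X ω) (Z ω) (εY ω') ∂P) ∧
    ∫ ω, f x (Z ω) (εY ω) ∂P = ∫ z, (∫ ω', f x z (εY ω') ∂P) ∂(P.map Z) := by
  -- basic measurability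
  have hZm : Measurable Z := hZ ▸ hεZ
  have hXm : Measurable X := by
    have : X = fun ω => Function.uncurry h (Z ω, εX ω) := by
      funext ω; simp [Function.uncurry, hXdef ω]
    rw [this]
    exact hh.comp (hZm.prodMk hεX)
  set W : Ω → ℝ × (Fin k → ℝ) := fun ω => (X ω, Z ω) with hW
  have hWm : Measurable W := hXm.prodMk hZm
  set ν : Measure (Fin l → ℝ) := P.map εY with hν
  haveI : IsProbabilityMeasure ν := Measure.isProbabilityMeasure_map hεY.aemeasurable
  -- two-variable function
  set F : (ℝ × (Fin k → ℝ)) × (Fin l → ℝ) → ℝ := fun q => f q.1.1 q.1.2 q.2 with hF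
  have hFm : Measurable F := by
    have : F = (fun p : ℝ × (Fin k → ℝ) × (Fin l → ℝ) => f p.1 p.2.1 p.2.2) ∘
        (fun q : (ℝ × (Fin k → ℝ)) × (Fin l → ℝ) => (q.1.1, q.1.2, q.2)) := rfl
    rw [this]
    exact hf.comp ((measurable_fst.comp measurable_fst).prodMk
      ((measurable_snd.comp measurable_fst).prodMk measurable_snd))
  have hFB : ∀ q, |F q| ≤ B := fun q => hfB _ _ _
  -- the regression function over ν
  set m' : ℝ × (Fin k → ℝ) → ℝ := fun p => ∫ e, f p.1 p.2 e ∂ν with hm'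
  have hm'eq : ∀ p : ℝ × (Fin k → ℝ), (∫ ω, f p.1 p.2 (εY ω) ∂P) = m' p := by
    intro p
    exact (integral_map hεY.aemeasurable
      ((hFm.comp (measurable_prodMk_left (x := p))).stronglyMeasurable).aestronglyMeasurable).symm
  have hm'meas : Measurable m' := by
    have := (hFm.stronglyMeasurable).integral_prod_right' (ν := ν)
    exact this.measurable
  have hm'B : ∀ p, |m' p| ≤ B := by
    intro p
    have hb := norm_integral_le_of_norm_le_const (μ := ν) (f := fun e => f p.1 p.2 e) (C := B)
      (Filter.Eventually.of_forall fun e => by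
        rw [Real.norm_eq_abs]; exact hfB p.1 p.2 e)
    simpa [Real.norm_eq_abs] using hb
  -- measurability claim (i)
  have goal1 : Measurable (fun p : ℝ × (Fin k → ℝ) => ∫ ω, f p.1 p.2 (εY ω) ∂P) := by
    have : (fun p : ℝ × (Fin k → ℝ) => ∫ ω, f p.1 p.2 (εY ω) ∂P) = m' := by
      funext p; exact hm'eq p
    rw [this]; exact hm'meas
  -- independence of W and εY
  have hWεY : IndepFun W εY P := by
    have : W = (fun q : (Fin k → ℝ) × (Fin m → ℝ) => (h q.1 q.2, q.1)) ∘
        (fun ω => (εZ ω, εX ω)) := by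
      funext ω; simp [hW, hXdef ω, hZ]
    rw [this]
    exact hindep2.comp (hh.prodMk measurable_fst) measurable_id
  have hmap : P.map (fun ω => (W ω, εY ω)) = (P.map W).prod ν := by
    rw [hν]
    exact (indepFun_iff_map_prod_eq_prod_map_map hWm.aemeasurable hεY.aemeasurable).mp hWεY
  haveI : IsProbabilityMeasure (P.map W) := Measure.isProbabilityMeasure_map hWm.aemeasurable
  -- conditional expectation claim
  have hYeq : Y = fun ω => F (W ω, εY ω) := by funext ω; simp [hF, hW, hYdef ω]
  have hYm : Measurable Y := by rw [hYeq]; exact hFm.comp (hWm.prodMk hεY)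
  have hYint : Integrable Y P :=
    integrable_of_bdd hYm.aestronglyMeasurable B (fun ω => by rw [hYdef ω]; exact hfB _ _ _)
  have hgm0 : Measurable (fun ω => m' (W ω)) := hm'meas.comp hWm
  have hgint : Integrable (fun ω => m' (W ω)) P :=
    integrable_of_bdd hgm0.aestronglyMeasurable B (fun ω => hm'B _)
  have goal2 : P[Y | MeasurableSpace.comap W inferInstance]
      =ᵐ[P] fun ω => ∫ ω', f (X ω) (Z ω) (εY ω') ∂P := by
    have hle : MeasurableSpace.comap W inferInstance ≤ (by infer_instance : MeasurableSpace Ω) :=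
      hWm.comap_le
    have key : (fun ω => m' (W ω)) =ᵐ[P] P[Y | MeasurableSpace.comap W inferInstance] := by
      refine ae_eq_condExp_of_forall_setIntegral_eq hle hYint
        (fun s _ _ => hgint.integrableOn) ?_ ?_
      · rintro s ⟨t, ht, rfl⟩ _
        -- ∫ in W⁻¹' t, m' (W ω) = ∫ in W⁻¹' t, Y
        have hFint : Integrable F ((P.map W).prod ν) :=
          integrable_of_bdd hFm.aestronglyMeasurable B hFB
        have hmapZ : ∫ w in t, m' w ∂(P.map W) = ∫ ω in W ⁻¹' t, m' (W ω) ∂P :=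
          setIntegral_map ht hm'meas.aestronglyMeasurable hWm.aemeasurable
        have hrhs : ∫ ω in W ⁻¹' t, Y ω ∂P = ∫ w in t, m' w ∂(P.map W) := by
          have hset : W ⁻¹' t = (fun ω => (W ω, εY ω)) ⁻¹' (t ×ˢ Set.univ) := by
            ext ω; simp
          rw [hYeq, hset, ← setIntegral_map (ht.prod MeasurableSet.univ)
            hFm.aestronglyMeasurable ((hWm.prodMk hεY).aemeasurable), hmap]
          rw [← Measure.restrict_prod_eq_prod_univ]
          rw [integral_prod _ (integrable_of_bdd hFm.aestronglyMeasurable B hFB)]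
        rw [hmapZ.symm, hrhs]
      · have hWc : Measurable[MeasurableSpace.comap W inferInstance] W :=
          measurable_iff_comap_le.mpr le_rfl
        exact ((hm'meas.comp hWc).stronglyMeasurable).aestronglyMeasurable
    exact key.symm.trans (Filter.EventuallyEq.of_eq (by funext ω; exact (hm'eq (X ω, Z ω)).symm))
  -- backdoor formula
  have hZεY : IndepFun Z εY P := by
    have : Z = Prod.fst ∘ (fun ω => (εZ ω, εX ω)) := by funext ω; simp [hZ]
    rw [this]
    exact hindep2.comp measurable_fst measurable_id
  have hmapZ : P.map (fun ω => (Z ω, εY ω)) = (P.map Z).prod ν := by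
    rw [hν]
    exact (indepFun_iff_map_prod_eq_prod_map_map hZm.aemeasurable hεY.aemeasurable).mp hZεY
  haveI : IsProbabilityMeasure (P.map Z) := Measure.isProbabilityMeasure_map hZm.aemeasurable
  have hGm : Measurable (fun q : (Fin k → ℝ) × (Fin l → ℝ) => f x q.1 q.2) :=
    hf.comp (measurable_const.prodMk (measurable_fst.prodMk measurable_snd))
  have goal3 : ∫ ω, f x (Z ω) (εY ω) ∂P = ∫ z, (∫ ω', f x z (εY ω') ∂P) ∂(P.map Z) := by
    have hGint : Integrable (fun q : (Fin k → ℝ) × (Fin l → ℝ) => f x q.1 q.2)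
        ((P.map Z).prod ν) := integrable_of_bdd hGm.aestronglyMeasurable B fun q => hfB _ _ _
    calc ∫ ω, f x (Z ω) (εY ω) ∂P
        = ∫ q, f x q.1 q.2 ∂(P.map (fun ω => (Z ω, εY ω))) := by
          rw [integral_map (hZm.prodMk hεY).aemeasurable hGm.aestronglyMeasurable]
      _ = ∫ q, f x q.1 q.2 ∂((P.map Z).prod ν) := by rw [hmapZ]
      _ = ∫ z, ∫ e, f x z e ∂ν ∂(P.map Z) := integral_prod _ hGint
      _ = ∫ z, (∫ ω', f x z (εY ω') ∂P) ∂(P.map Z) := by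
          congr 1; funext z; exact (hm'eq (x, z)).symm
  exact ⟨⟨goal1, goal2⟩, goal3⟩
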